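/- Let 1 ≤ p < ∞ with p ≠ 2, and let r ≥ n. A matrix τ ∈ M_{r,n}(ℂ), viewed as a linear map ℓ_p^n → ℓ_p^r, is an isometry if and only if the columns of τ have mutually disjoint supports and each column has ℓ_p norm equal to 1. -/

import Mathlib

open Finset

/-- The ℓ_q norm of a finite complex sequence. -/
noncomputable def lpNorm (q : ℝ) {m : ℕ} (x : Fin m → ℂ) : ℝ :=
  (∑ i, ‖x i‖ ^ q) ^ (1 / q)

private lemma rpow_strict_subadd {s t q : ℝ} (hs : 0 < s) (ht : 0 < t)
    (hq0 : 0 < q) (hq1 : q < 1) : (s + t) ^ q < s ^ q + t ^ q := by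
  have hst : 0 < s + t := by linarith
  have key : ∀ x : ℝ, 0 < x → x < 1 → x < x ^ q := fun x hx hx1 => by
    calc x = x ^ (1:ℝ) := (Real.rpow_one x).symm
    _ < x ^ q := Real.rpow_lt_rpow_of_exponent_gt hx hx1 hq1
  have h1 := key (s/(s+t)) (div_pos hs hst) ((div_lt_one hst).2 (by linarith))
  have h2 := key (t/(s+t)) (div_pos ht hst) ((div_lt_one hst).2 (by linarith))
  have hsum : s/(s+t) + t/(s+t) = 1 := by field_simp
  have hlt : 1 < (s/(s+t)) ^ q + (t/(s+t)) ^ q := by linarith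
  have h3 := mul_lt_mul_of_pos_left hlt (Real.rpow_pos_of_pos hst q)
  rw [mul_one] at h3
  have hne : ((s+t):ℝ) ^ q ≠ 0 := (Real.rpow_pos_of_pos hst q).ne'
  calc (s+t)^q < (s+t)^q * ((s/(s+t))^q + (t/(s+t))^q) := h3
  _ = s ^ q + t ^ q := by
      rw [Real.div_rpow hs.le hst.le, Real.div_rpow ht.le hst.le]
      field_simp

private lemma rpow_strict_superadd {s t q : ℝ} (hs : 0 < s) (ht : 0 < t)
    (hq : 1 < q) : s ^ q + t ^ q < (s + t) ^ q := by
  have hst : 0 < s + t := by linarith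
  have key : ∀ x : ℝ, 0 < x → x < 1 → x ^ q < x := fun x hx hx1 => by
    calc x ^ q < x ^ (1:ℝ) := Real.rpow_lt_rpow_of_exponent_gt hx hx1 hq
    _ = x := Real.rpow_one x
  have h1 := key (s/(s+t)) (div_pos hs hst) ((div_lt_one hst).2 (by linarith))
  have h2 := key (t/(s+t)) (div_pos ht hst) ((div_lt_one hst).2 (by linarith))
  have hsum : s/(s+t) + t/(s+t) = 1 := by field_simp
  have hlt : (s/(s+t)) ^ q + (t/(s+t)) ^ q < 1 := by linarith
  have h3 := mul_lt_mul_of_pos_left hlt (Real.rpow_pos_of_pos hst q)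
  rw [mul_one] at h3
  have hne : ((s+t):ℝ) ^ q ≠ 0 := (Real.rpow_pos_of_pos hst q).ne'
  calc s ^ q + t ^ q = (s+t)^q * ((s/(s+t))^q + (t/(s+t))^q) := by
        rw [Real.div_rpow hs.le hst.le, Real.div_rpow ht.le hst.le]
        field_simp
  _ < (s+t)^q := h3

private lemma rpow_subadd {s t q : ℝ} (hs : 0 ≤ s) (ht : 0 ≤ t)
    (hq0 : 0 < q) (hq1 : q < 1) : (s + t) ^ q ≤ s ^ q + t ^ q := by
  rcases hs.eq_or_lt with rfl|hs'
  · simp [Real.zero_rpow hq0.ne']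
  rcases ht.eq_or_lt with rfl|ht'
  · simp [Real.zero_rpow hq0.ne']
  exact (rpow_strict_subadd hs' ht' hq0 hq1).le

private lemma rpow_superadd {s t q : ℝ} (hs : 0 ≤ s) (ht : 0 ≤ t)
    (hq : 1 < q) : s ^ q + t ^ q ≤ (s + t) ^ q := by
  rcases hs.eq_or_lt with rfl|hs'
  · simp [Real.zero_rpow (by linarith : q ≠ 0)]
  rcases ht.eq_or_lt with rfl|ht'
  · simp [Real.zero_rpow (by linarith : q ≠ 0)]
  exact (rpow_strict_superadd hs' ht' hq).le

private lemma mean_concave {u v q : ℝ} (hu : 0 ≤ u) (hv : 0 ≤ v)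
    (hq0 : 0 ≤ q) (hq1 : q ≤ 1) : u ^ q + v ^ q ≤ 2 * ((u + v) / 2) ^ q := by
  have h := (Real.concaveOn_rpow hq0 hq1).2 (Set.mem_Ici.2 hu) (Set.mem_Ici.2 hv)
      (by norm_num : (0:ℝ) ≤ 1/2) (by norm_num : (0:ℝ) ≤ 1/2) (by norm_num)
  simp only [smul_eq_mul] at h
  have he : (1:ℝ)/2 * u + 1/2 * v = (u+v)/2 := by ring
  rw [he] at h
  linarith

private lemma mean_convex {u v q : ℝ} (hu : 0 ≤ u) (hv : 0 ≤ v)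
    (hq : 1 ≤ q) : 2 * ((u + v) / 2) ^ q ≤ u ^ q + v ^ q := by
  have h := (convexOn_rpow hq).2 (Set.mem_Ici.2 hu) (Set.mem_Ici.2 hv)
      (by norm_num : (0:ℝ) ≤ 1/2) (by norm_num : (0:ℝ) ≤ 1/2) (by norm_num)
  simp only [smul_eq_mul] at h
  have he : (1:ℝ)/2 * u + 1/2 * v = (u+v)/2 := by ring
  rw [he] at h
  linarith

private lemma norm_rpow_as_sq (q : ℝ) (x : ℂ) : ‖x‖ ^ (2 * q) = (‖x‖ * ‖x‖) ^ q := by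
  have h2 : ‖x‖ * ‖x‖ = ‖x‖ ^ (2:ℝ) := by
    rw [show (2:ℝ) = ((2:ℕ):ℝ) by norm_num, Real.rpow_natCast]; ring
  rw [h2, ← Real.rpow_mul (norm_nonneg x)]

private lemma clarkson_lt (p : ℝ) (hp0 : 0 < p) (hp2 : p < 2) (a b : ℂ) :
    ‖a+b‖^p + ‖a-b‖^p ≤ 2 * (‖a‖^p + ‖b‖^p) ∧
    (a ≠ 0 → b ≠ 0 → ‖a+b‖^p + ‖a-b‖^p < 2 * (‖a‖^p + ‖b‖^p)) := by
  set q := p/2 with hq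
  have hq0 : 0 < q := by positivity
  have hq1 : q < 1 := by rw [hq]; linarith
  have hid : ∀ x : ℂ, ‖x‖ ^ p = (‖x‖*‖x‖) ^ q := fun x => by
    rw [← norm_rpow_as_sq q x, show 2 * q = p by rw [hq]; ring]
  have par : ‖a+b‖*‖a+b‖ + ‖a-b‖*‖a-b‖ = 2*(‖a‖*‖a‖ + ‖b‖*‖b‖) := by
    simpa only [sq] using parallelogram_law_with_norm ℂ a b
  have step1 : ‖a+b‖^p + ‖a-b‖^p ≤ 2 * ((‖a‖*‖a‖ + ‖b‖*‖b‖)) ^ q := by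
    rw [hid (a+b), hid (a-b)]
    calc (‖a+b‖*‖a+b‖)^q + (‖a-b‖*‖a-b‖)^q
        ≤ 2*(((‖a+b‖*‖a+b‖) + (‖a-b‖*‖a-b‖))/2)^q :=
          mean_concave (mul_self_nonneg _) (mul_self_nonneg _) hq0.le hq1.le
      _ = 2 * ((‖a‖*‖a‖ + ‖b‖*‖b‖)) ^ q := by rw [par]; ring_nf
  constructor
  · refine step1.trans ?_
    rw [hid a, hid b]
    have := rpow_subadd (mul_self_nonneg ‖a‖) (mul_self_nonneg ‖b‖) hq0 hq1
    linarith
  · intro ha hb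
    refine lt_of_le_of_lt step1 ?_
    rw [hid a, hid b]
    have ha' : 0 < ‖a‖ * ‖a‖ := mul_pos (norm_pos_iff.2 ha) (norm_pos_iff.2 ha)
    have hb' : 0 < ‖b‖ * ‖b‖ := mul_pos (norm_pos_iff.2 hb) (norm_pos_iff.2 hb)
    have := rpow_strict_subadd ha' hb' hq0 hq1
    linarith

private lemma clarkson_gt (p : ℝ) (hp2 : 2 < p) (a b : ℂ) :
    2 * (‖a‖^p + ‖b‖^p) ≤ ‖a+b‖^p + ‖a-b‖^p ∧
    (a ≠ 0 → b ≠ 0 → 2 * (‖a‖^p + ‖b‖^p) < ‖a+b‖^p + ‖a-b‖^p) := by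
  set q := p/2 with hq
  have hq1 : 1 < q := by rw [hq]; linarith
  have hid : ∀ x : ℂ, ‖x‖ ^ p = (‖x‖*‖x‖) ^ q := fun x => by
    rw [← norm_rpow_as_sq q x, show 2 * q = p by rw [hq]; ring]
  have par : ‖a+b‖*‖a+b‖ + ‖a-b‖*‖a-b‖ = 2*(‖a‖*‖a‖ + ‖b‖*‖b‖) := by
    simpa only [sq] using parallelogram_law_with_norm ℂ a b
  have step1 : 2 * ((‖a‖*‖a‖ + ‖b‖*‖b‖)) ^ q ≤ ‖a+b‖^p + ‖a-b‖^p := by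
    rw [hid (a+b), hid (a-b)]
    calc 2 * ((‖a‖*‖a‖ + ‖b‖*‖b‖)) ^ q
        = 2*(((‖a+b‖*‖a+b‖) + (‖a-b‖*‖a-b‖))/2)^q := by rw [par]; ring_nf
      _ ≤ (‖a+b‖*‖a+b‖)^q + (‖a-b‖*‖a-b‖)^q :=
          mean_convex (mul_self_nonneg _) (mul_self_nonneg _) hq1.le
  constructor
  · refine le_trans ?_ step1
    rw [hid a, hid b]
    have := rpow_superadd (mul_self_nonneg ‖a‖) (mul_self_nonneg ‖b‖) hq1
    linarith
  · intro ha hb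
    refine lt_of_lt_of_le ?_ step1
    rw [hid a, hid b]
    have ha' : 0 < ‖a‖ * ‖a‖ := mul_pos (norm_pos_iff.2 ha) (norm_pos_iff.2 ha)
    have hb' : 0 < ‖b‖ * ‖b‖ := mul_pos (norm_pos_iff.2 hb) (norm_pos_iff.2 hb)
    have := rpow_strict_superadd ha' hb' hq1
    linarith

private lemma sum_rpow_eq_of_lpNorm_eq {p : ℝ} (hp : 0 < p) {m : ℕ} (x : Fin m → ℂ) {c : ℝ}
    (hc : 0 ≤ c) (h : lpNorm p x = c ^ (1/p)) : ∑ i, ‖x i‖ ^ p = c := by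
  have hS : 0 ≤ ∑ i, ‖x i‖ ^ p := Finset.sum_nonneg fun i _ => Real.rpow_nonneg (norm_nonneg _) _
  have h2 := congrArg (fun y : ℝ => y ^ p) h
  simp only [lpNorm] at h2
  rwa [← Real.rpow_mul hS, ← Real.rpow_mul hc, one_div_mul_cancel hp.ne',
    Real.rpow_one, Real.rpow_one] at h2

/-- Lemma 4.3: for `1 ≤ p < ∞`, `p ≠ 2`, and `r ≥ n`, a matrix `τ ∈ M_{r,n}(ℂ)` is an
isometry `ℓ_p^n → ℓ_p^r` iff its columns have mutually disjoint supports and each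
column has ℓ_p norm 1. -/
theorem isometry_iff_disjoint_supports (p : ℝ) (hp : 1 ≤ p) (hp2 : p ≠ 2)
    (n r : ℕ) (hnr : n ≤ r) (τ : Matrix (Fin r) (Fin n) ℂ) :
    (∀ x : Fin n → ℂ, lpNorm p (τ.mulVec x) = lpNorm p x) ↔
      ((∀ j k : Fin n, j ≠ k → ∀ i : Fin r, τ i j = 0 ∨ τ i k = 0) ∧
        ∀ j : Fin n, lpNorm p (fun i => τ i j) = 1) := by
  have hp0 : 0 < p := lt_of_lt_of_le one_pos hp
  have hpne : p ≠ 0 := hp0.ne'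
  constructor
  · intro hiso
    have hcol : ∀ j, lpNorm p (fun i => τ i j) = 1 := by
      intro j
      have h1 : τ.mulVec (Pi.single j 1) = fun i => τ i j := by
        simp [Matrix.mulVec_single]; rfl
      have h2 : lpNorm p (Pi.single j (1:ℂ)) = 1 := by
        unfold lpNorm
        have hterm : ∀ k, ‖(Pi.single j (1:ℂ) : Fin n → ℂ) k‖ ^ p = if k = j then 1 else 0 := by
          intro k
          rcases eq_or_ne k j with rfl|hk
          · simp
          · simp [Pi.single_apply, hk, Real.zero_rpow hpne]
        rw [Finset.sum_congr rfl fun k _ => hterm k,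
          Finset.sum_ite_eq' univ j fun _ => (1:ℝ)]
        simp
      have h3 := hiso (Pi.single j 1)
      rw [h1, h2] at h3
      exact h3
    have colsum : ∀ j, ∑ i, ‖τ i j‖ ^ p = 1 := fun j =>
      sum_rpow_eq_of_lpNorm_eq hp0 _ zero_le_one
        (by rw [hcol j, Real.one_rpow])
    refine ⟨?_, hcol⟩
    intro j k hjk i
    by_contra hcon
    push_neg at hcon
    obtain ⟨ha0, hb0⟩ := hcon
    have hplus : ∑ i, ‖τ i j + τ i k‖ ^ p = 2 := by
      refine sum_rpow_eq_of_lpNorm_eq hp0 _ (by norm_num) ?_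
      have hmv : τ.mulVec (Pi.single j 1 + Pi.single k 1) = fun i => τ i j + τ i k := by
        rw [Matrix.mulVec_add]; simp [Matrix.mulVec_single]; rfl
      rw [← hmv, hiso]
      unfold lpNorm
      congr 1
      have hterm : ∀ l, ‖((Pi.single j (1:ℂ) + Pi.single k 1 : Fin n → ℂ)) l‖ ^ p
          = (if l = j then 1 else 0) + (if l = k then 1 else 0) := by
        intro l
        by_cases hj : l = j
        · subst hj; simp [Pi.single_apply, hjk]
        by_cases hk : l = k
        · subst hk; simp [Pi.single_apply, hj]
        · simp [Pi.single_apply, hj, hk, Real.zero_rpow hpne]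
      rw [Finset.sum_congr rfl fun l _ => hterm l, Finset.sum_add_distrib,
        Finset.sum_ite_eq' univ j fun _ => (1:ℝ),
        Finset.sum_ite_eq' univ k fun _ => (1:ℝ)]
      norm_num
    have hminus : ∑ i, ‖τ i j - τ i k‖ ^ p = 2 := by
      refine sum_rpow_eq_of_lpNorm_eq hp0 _ (by norm_num) ?_
      have hmv : τ.mulVec (Pi.single j 1 - Pi.single k 1) = fun i => τ i j - τ i k := by
        rw [Matrix.mulVec_sub]; simp [Matrix.mulVec_single]; rfl
      rw [← hmv, hiso]
      unfold lpNorm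
      congr 1
      have hterm : ∀ l, ‖((Pi.single j (1:ℂ) - Pi.single k 1 : Fin n → ℂ)) l‖ ^ p
          = (if l = j then 1 else 0) + (if l = k then 1 else 0) := by
        intro l
        by_cases hj : l = j
        · subst hj; simp [Pi.single_apply, hjk]
        by_cases hk : l = k
        · subst hk; simp [Pi.single_apply, hj]
        · simp [Pi.single_apply, hj, hk, Real.zero_rpow hpne]
      rw [Finset.sum_congr rfl fun l _ => hterm l, Finset.sum_add_distrib,
        Finset.sum_ite_eq' univ j fun _ => (1:ℝ),
        Finset.sum_ite_eq' univ k fun _ => (1:ℝ)]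
      norm_num
    have hsum4 : ∑ i, (‖τ i j + τ i k‖ ^ p + ‖τ i j - τ i k‖ ^ p)
        = ∑ i, 2 * (‖τ i j‖ ^ p + ‖τ i k‖ ^ p) := by
      rw [Finset.sum_add_distrib, hplus, hminus]
      have : ∑ i, 2 * (‖τ i j‖ ^ p + ‖τ i k‖ ^ p)
          = 2 * ((∑ i, ‖τ i j‖ ^ p) + ∑ i, ‖τ i k‖ ^ p) := by
        rw [← Finset.sum_add_distrib, Finset.mul_sum]
      rw [this, colsum j, colsum k]; norm_num
    rcases lt_or_gt_of_ne hp2 with hlt|hgt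
    · have hstrict : ∑ i, (‖τ i j + τ i k‖ ^ p + ‖τ i j - τ i k‖ ^ p)
          < ∑ i, 2 * (‖τ i j‖ ^ p + ‖τ i k‖ ^ p) :=
        Finset.sum_lt_sum (fun i _ => (clarkson_lt p hp0 hlt _ _).1)
          ⟨i, Finset.mem_univ i, (clarkson_lt p hp0 hlt _ _).2 ha0 hb0⟩
      exact absurd hsum4 (ne_of_lt hstrict)
    · have hstrict : ∑ i, 2 * (‖τ i j‖ ^ p + ‖τ i k‖ ^ p)
          < ∑ i, (‖τ i j + τ i k‖ ^ p + ‖τ i j - τ i k‖ ^ p) :=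
        Finset.sum_lt_sum (fun i _ => (clarkson_gt p hgt _ _).1)
          ⟨i, Finset.mem_univ i, (clarkson_gt p hgt _ _).2 ha0 hb0⟩
      exact absurd hsum4.symm (ne_of_lt hstrict)
  · rintro ⟨hdisj, hcol⟩ x
    have colsum : ∀ j, ∑ i, ‖τ i j‖ ^ p = 1 := fun j =>
      sum_rpow_eq_of_lpNorm_eq hp0 _ zero_le_one
        (by rw [hcol j, Real.one_rpow])
    unfold lpNorm
    congr 1
    have key : ∀ i, ‖τ.mulVec x i‖ ^ p = ∑ j, ‖τ i j‖ ^ p * ‖x j‖ ^ p := by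
      intro i
      have hmv : τ.mulVec x i = ∑ j, τ i j * x j := rfl
      by_cases hex : ∃ j0, τ i j0 ≠ 0
      · obtain ⟨j0, hj0⟩ := hex
        have hz : ∀ j, j ≠ j0 → τ i j = 0 := fun j hj => (hdisj j j0 hj i).resolve_right hj0
        have h1 : τ.mulVec x i = τ i j0 * x j0 := by
          rw [hmv]
          exact Finset.sum_eq_single j0 (fun j _ hj => by rw [hz j hj, zero_mul])
            (fun h => absurd (Finset.mem_univ j0) h)
        rw [h1, norm_mul, Real.mul_rpow (norm_nonneg _) (norm_nonneg _)]
        exact (Finset.sum_eq_single (f := fun j => ‖τ i j‖ ^ p * ‖x j‖ ^ p) j0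
          (fun j _ hj => show ‖τ i j‖ ^ p * ‖x j‖ ^ p = 0 by
            rw [hz j hj, norm_zero, Real.zero_rpow hpne, zero_mul])
          (fun h => absurd (Finset.mem_univ j0) h)).symm
      · push_neg at hex
        have h1 : τ.mulVec x i = 0 := by
          rw [hmv]
          exact Finset.sum_eq_zero fun j _ => by rw [hex j, zero_mul]
        rw [h1, norm_zero, Real.zero_rpow hpne]
        exact (Finset.sum_eq_zero (f := fun j => ‖τ i j‖ ^ p * ‖x j‖ ^ p) fun j _ => show ‖τ i j‖ ^ p * ‖x j‖ ^ p = 0 by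
          rw [hex j, norm_zero, Real.zero_rpow hpne, zero_mul]).symm
    rw [Finset.sum_congr rfl fun i _ => key i, Finset.sum_comm]
    refine Finset.sum_congr rfl fun j _ => ?_
    rw [← Finset.sum_mul, colsum j, one_mul]
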